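/- For u ≥ 1, |B_{2u}| = |V⁰_{2u}| + 2·|Ṽ⁺_{2u}| - 2u + 1, where V⁰_{2u} is the set of lists of nonzero integers with absolute values summing to 2u and sum 0, and Ṽ⁺_{2u} is the set of lists of positive integers with at least two entries, each entry different from u, summing to 2u. B_{2u} is the set of lists of nonzero residues modulo 2u summing to 0 in ℤ/2u that are congruent entrywise to -ν for some list ν of nonzero integers with Σ|νᵢ| = 2u. -/

import Mathlib

/-- B_{2u} : lists of nonzero residues modulo 2u summing to 0 in ℤ/2u whose
entries are congruent to -νᵢ for some list ν of nonzero integers with Σ|νᵢ| = 2u. -/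
def Bset (κ : ℕ) : Set (List (ZMod κ)) :=
  {b | (∀ x ∈ b, x ≠ 0) ∧ b.sum = 0 ∧
    ∃ ν : List ℤ, (∀ x ∈ ν, x ≠ 0) ∧ (ν.map (fun x => |x|)).sum = (κ : ℤ) ∧
      List.Forall₂ (fun (bi : ZMod κ) (νi : ℤ) => bi = -(νi : ZMod κ)) b ν}

/-- V⁰_κ : lists of nonzero integers with absolute values summing to κ and sum 0. -/
def V0 (κ : ℕ) : Set (List ℤ) :=
  {ν | (∀ x ∈ ν, x ≠ 0) ∧ (ν.map (fun x => |x|)).sum = (κ : ℤ) ∧ ν.sum = 0}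

/-- Ṽ⁺_{2u} : lists of positive integers with at least two entries, each entry
different from u, summing to 2u. -/
def Vtilde (u : ℕ) : Set (List ℤ) :=
  {ν | (∀ x ∈ ν, 0 < x) ∧ (∀ x ∈ ν, x ≠ (u : ℤ)) ∧ 2 ≤ ν.length ∧
    ν.sum = 2 * (u : ℤ)}

namespace CBE
open List
variable {u : ℕ}

lemma sum_map_add {α : Type*} (f g : α → ℤ) (l : List α) :
    (l.map (fun x => f x + g x)).sum = (l.map f).sum + (l.map g).sum := by
  induction l with
  | nil => simp
  | cons a l ih => simp [ih]; ring


lemma sum_map_neg' {α : Type*} (f : α → ℤ) (l : List α) :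
    (l.map (fun x => -f x)).sum = -(l.map f).sum := by
  induction l with
  | nil => simp
  | cons a l ih => simp [ih]; ring


lemma sum_nonneg_all_zero {l : List ℤ} (h : ∀ x ∈ l, 0 ≤ x) (hs : l.sum = 0) :
    ∀ x ∈ l, x = 0 := by
  induction l with
  | nil => simp
  | cons a l ih =>
    have ha : 0 ≤ a := h a (by simp)
    have hl : 0 ≤ l.sum := List.sum_nonneg (fun x hx => h x (by simp [hx]))
    simp only [List.sum_cons] at hs
    intro x hx
    rcases List.mem_cons.1 hx with rfl | hx
    · omega
    · exact ih (fun y hy => h y (by simp [hy])) (by omega) x hx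


lemma all_pos_of_abs_sum_eq {l : List ℤ} (hnz : ∀ x ∈ l, x ≠ 0)
    (habs : (l.map (fun x => |x|)).sum = l.sum) : ∀ x ∈ l, 0 < x := by
  have h0 : (l.map (fun x => |x| - x)).sum = 0 := by
    have := sum_map_add (fun x => |x| - x) (fun x => x) l
    simp only [sub_add_cancel] at this
    simp only [List.map_id'] at this
    omega
  intro x hx
  have := sum_nonneg_all_zero (l := l.map (fun x => |x| - x))
    (by intro y hy; obtain ⟨z, hz, rfl⟩ := List.mem_map.1 hy; have := le_abs_self z; omega)
    h0 (|x| - x) (List.mem_map.2 ⟨x, hx, rfl⟩)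
  have hx0 := hnz x hx
  have := abs_nonneg x
  rcases abs_cases x with ⟨h1, _⟩ | ⟨h1, _⟩ <;> omega


lemma all_neg_of_abs_sum_eq {l : List ℤ} (hnz : ∀ x ∈ l, x ≠ 0)
    (habs : (l.map (fun x => |x|)).sum = -l.sum) : ∀ x ∈ l, x < 0 := by
  have h0 : (l.map (fun x => |x| + x)).sum = 0 := by
    have := sum_map_add (fun x => |x|) (fun x => x) l
    simp only [List.map_id'] at this
    omega
  intro x hx
  have := sum_nonneg_all_zero (l := l.map (fun x => |x| + x))
    (by intro y hy; obtain ⟨z, hz, rfl⟩ := List.mem_map.1 hy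
        have := neg_abs_le z; omega)
    h0 (|x| + x) (List.mem_map.2 ⟨x, hx, rfl⟩)
  have hx0 := hnz x hx
  rcases abs_cases x with ⟨h1, _⟩ | ⟨h1, _⟩ <;> omega


lemma length_le_abs_sum {l : List ℤ} (hnz : ∀ x ∈ l, x ≠ 0) :
    (l.length : ℤ) ≤ (l.map (fun x => |x|)).sum := by
  induction l with
  | nil => simp
  | cons a l ih =>
    have h1 : 1 ≤ |a| := Int.one_le_abs (by simpa using hnz a (by simp))
    have := ih (fun x hx => hnz x (by simp [hx]))
    simp only [List.map_cons, List.sum_cons, List.length_cons]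
    push_cast
    omega


lemma abs_le_abs_sum {l : List ℤ} {x : ℤ} (hx : x ∈ l) :
    |x| ≤ (l.map (fun x => |x|)).sum :=
  List.single_le_sum (by intro y hy; obtain ⟨z, _, rfl⟩ := List.mem_map.1 hy; exact abs_nonneg z)
    _ (List.mem_map.2 ⟨x, hx, rfl⟩)


lemma abs_list_sum_le {l : List ℤ} : |l.sum| ≤ (l.map (fun x => |x|)).sum := by
  induction l with
  | nil => simp
  | cons a l ih =>
    simp only [List.sum_cons, List.map_cons]
    exact le_trans (abs_add_le _ _) (by omega)


lemma eq_of_zip {ν μ : List ℤ} (hlen : ν.length = μ.length)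
    (h : ∀ p ∈ ν.zip μ, p.1 = p.2) : ν = μ := by
  induction ν generalizing μ with
  | nil => cases μ <;> simp_all
  | cons a l ih =>
    cases μ with
    | nil => simp at hlen
    | cons b m =>
      have h1 : a = b := h (a, b) (by simp)
      have h2 := ih (by simpa using hlen) (fun p hp => h p (by simp [List.zip_cons_cons, hp]))
      rw [h1, h2]


lemma zip_map_eq {α : Type*} {f : ℤ → α} {ν μ : List ℤ} (h : ν.map f = μ.map f) :
    ∀ p ∈ ν.zip μ, f p.1 = f p.2 := by
  induction ν generalizing μ with
  | nil => simp
  | cons a l ih =>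
    cases μ with
    | nil => simp
    | cons b m =>
      simp only [List.map_cons, List.cons.injEq] at h
      intro p hp
      rcases List.mem_cons.1 (by simpa [List.zip_cons_cons] using hp) with rfl | hp'
      · exact h.1
      · exact ih h.2 p hp'


lemma finite_master (n : ℕ) :
    {l : List ℤ | (∀ x ∈ l, x ≠ 0) ∧ (l.map (fun x => |x|)).sum = (n:ℤ)}.Finite := by
  classical
  have hfin : (Set.Icc (-(n:ℤ)) n).Finite := Set.finite_Icc _ _
  haveI := hfin.to_subtype
  have hfin2 : {l : List (Set.Icc (-(n:ℤ)) n) | l.length ≤ n}.Finite :=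
    List.finite_length_le _ n
  apply Set.Finite.subset (hfin2.image (List.map Subtype.val))
  rintro l ⟨hnz, hsum⟩
  have hlen : l.length ≤ n := by
    have := length_le_abs_sum hnz
    rw [hsum] at this
    exact_mod_cast this
  have hmem : ∀ x ∈ l, x ∈ Set.Icc (-(n:ℤ)) n := by
    intro x hx
    have := abs_le_abs_sum hx
    rw [hsum] at this
    constructor <;> [skip; skip] <;> · rcases abs_cases x with ⟨h, _⟩ | ⟨h, _⟩ <;> omega
  refine ⟨l.attach.map (fun x => ⟨x.1, hmem x.1 x.2⟩), by simpa using hlen, ?_⟩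
  simp [List.map_map]


lemma key_zip {u : ℕ} (hu : 1 ≤ u) (l : List (ℤ × ℤ))
    (hdvd : ∀ p ∈ l, (2*(u:ℤ)) ∣ (p.1 - p.2))
    (hb1 : ∀ p ∈ l, |p.1| < 2*(u:ℤ)) (hb2 : ∀ p ∈ l, |p.2| < 2*(u:ℤ))
    (hnz1 : ∀ p ∈ l, p.1 ≠ 0)
    (hs1 : (l.map (fun p => |p.1|)).sum = 2*(u:ℤ))
    (hs2 : (l.map (fun p => |p.2|)).sum = 2*(u:ℤ)) :
    (∀ p ∈ l, p.1 = p.2) ∨ ((u:ℤ), -(u:ℤ)) ∈ l ∨ (-(u:ℤ), (u:ℤ)) ∈ l ∨ l.length ≤ 2 := by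
  classical
  have hupos : (0:ℤ) < (u:ℤ) := by exact_mod_cast hu
  set q : ℤ × ℤ → Bool := fun p => decide (p.1 ≠ p.2) with hq
  set l' := l.filter q with hl'
  set l'' := l.filter (fun p => !q p) with hl''
  have hperm : (l' ++ l'').Perm l := List.filter_append_perm q l
  have hsplit : ∀ f : ℤ × ℤ → ℤ, (l'.map f).sum + (l''.map f).sum = (l.map f).sum := by
    intro f
    rw [← List.sum_append, ← List.map_append]
    exact (hperm.map f).sum_eq
  have hmem' : ∀ p ∈ l', p ∈ l ∧ p.1 ≠ p.2 := by
    intro p hp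
    refine ⟨List.mem_of_mem_filter hp, ?_⟩
    have := List.of_mem_filter hp
    simpa [hq] using this
  have hmem'' : ∀ p ∈ l'', p ∈ l ∧ p.1 = p.2 := by
    intro p hp
    refine ⟨List.mem_of_mem_filter hp, ?_⟩
    have := List.of_mem_filter hp
    simpa [hq] using this
  have hdiff : ∀ p ∈ l', |p.1 - p.2| = 2*(u:ℤ) := by
    intro p hp
    obtain ⟨hpl, hpne⟩ := hmem' p hp
    have hd := hdvd p hpl
    have hne : p.1 - p.2 ≠ 0 := sub_ne_zero.2 hpne
    have hle : 2*(u:ℤ) ≤ |p.1 - p.2| := Int.le_of_dvd (abs_pos.2 hne) ((dvd_abs _ _).2 hd)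
    have hlt : |p.1 - p.2| < 4*(u:ℤ) := by
      have h3 : |p.1 - p.2| ≤ |p.1| + |p.2| := abs_sub _ _
      have h1 := hb1 p hpl; have h2 := hb2 p hpl
      omega
    obtain ⟨c, hc⟩ := (dvd_abs _ _).2 hd
    rw [hc] at hle hlt
    have hc1 : 1 ≤ c := by nlinarith
    have hc2 : c < 2 := by nlinarith
    have : c = 1 := by omega
    rw [hc, this, mul_one]
  have htot : (l.map (fun p => |p.1| + |p.2|)).sum = 4*(u:ℤ) := by
    rw [sum_map_add (fun p : ℤ × ℤ => |p.1|) (fun p => |p.2|) l, hs1, hs2]; ring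
  have hlow : (l'.length : ℤ) * (2*(u:ℤ)) ≤ (l'.map (fun p => |p.1| + |p.2|)).sum := by
    have h1 : (l'.map (fun p => |p.1 - p.2|)).sum = (l'.length : ℤ) * (2*(u:ℤ)) := by
      have := List.sum_eq_card_nsmul (l'.map (fun p => |p.1 - p.2|)) (2*(u:ℤ))
        (by intro x hx; obtain ⟨p, hp, rfl⟩ := List.mem_map.1 hx; exact hdiff p hp)
      simpa [nsmul_eq_mul] using this
    have h2 : (l'.map (fun p => |p.1 - p.2|)).sum ≤ (l'.map (fun p => |p.1| + |p.2|)).sum := by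
      apply List.sum_le_sum
      intro p hp
      exact abs_sub _ _
    omega
  have hnn'' : 0 ≤ (l''.map (fun p => |p.1| + |p.2|)).sum :=
    List.sum_nonneg (by intro x hx; obtain ⟨p, _, rfl⟩ := List.mem_map.1 hx; positivity)
  have hcard : l'.length ≤ 2 := by
    by_contra hcon
    push_neg at hcon
    have h3 : (3:ℤ) ≤ (l'.length : ℤ) := by exact_mod_cast hcon
    have := hsplit (fun p => |p.1| + |p.2|)
    nlinarith
  have hcase : l'.length = 0 ∨ l'.length = 1 ∨ l'.length = 2 := by omega
  rcases hcase with h | h | h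
  · left
    have hnil : l' = [] := List.length_eq_zero_iff.1 h
    intro p hp
    by_contra hne
    have hpmem : p ∈ l' := List.mem_filter.2 ⟨hp, by simpa [hq] using hne⟩
    rw [hnil] at hpmem
    exact List.not_mem_nil hpmem
  · obtain ⟨p₀, hp₀⟩ := List.length_eq_one_iff.1 h
    have hp₀l' : p₀ ∈ l' := by rw [hp₀]; exact List.mem_singleton_self _
    obtain ⟨hp₀l, hp₀ne⟩ := hmem' p₀ hp₀l'
    have hd := hdiff p₀ hp₀l'
    have e1 := hsplit (fun p => |p.1|)
    have e2 := hsplit (fun p => |p.2|)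
    have heqsum : (l''.map (fun p => |p.1|)).sum = (l''.map (fun p => |p.2|)).sum := by
      apply congrArg List.sum
      apply List.map_congr_left
      intro p hp
      rw [(hmem'' p hp).2]
    rw [hp₀] at e1 e2
    simp only [List.map_cons, List.map_nil, List.sum_cons, List.sum_nil] at e1 e2
    have habs : |p₀.1| = |p₀.2| := by omega
    have hcases : (p₀.1 = u ∧ p₀.2 = -(u:ℤ)) ∨ (p₀.1 = -(u:ℤ) ∧ p₀.2 = u) := by
      rcases abs_cases p₀.1 with ⟨ha, _⟩ | ⟨ha, _⟩ <;>
      rcases abs_cases p₀.2 with ⟨hb, _⟩ | ⟨hb, _⟩ <;>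
      rcases abs_cases (p₀.1 - p₀.2) with ⟨hc, _⟩ | ⟨hc, _⟩ <;> omega
    rcases hcases with ⟨h1, h2⟩ | ⟨h1, h2⟩
    · right; left
      have hep : p₀ = ((u:ℤ), -(u:ℤ)) := Prod.ext h1 h2
      rw [← hep]; exact hp₀l
    · right; right; left
      have hep : p₀ = (-(u:ℤ), (u:ℤ)) := Prod.ext h1 h2
      rw [← hep]; exact hp₀l
  · right; right; right
    have hA : 4*(u:ℤ) ≤ (l'.map (fun p => |p.1| + |p.2|)).sum := by
      rw [h] at hlow; push_cast at hlow; linarith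
    have hsum'' : (l''.map (fun p => |p.1| + |p.2|)).sum = 0 := by
      have := hsplit (fun p => |p.1| + |p.2|)
      omega
    have hnil : l'' = [] := by
      rcases List.eq_nil_or_concat l'' with hn | ⟨L, p, hcat⟩
      · exact hn
      · exfalso
        have hp : p ∈ l'' := by rw [hcat]; simp
        have hz := sum_nonneg_all_zero (l := l''.map (fun p => |p.1| + |p.2|))
          (by intro x hx; obtain ⟨r, _, rfl⟩ := List.mem_map.1 hx; positivity) hsum''
          (|p.1| + |p.2|) (List.mem_map.2 ⟨p, hp, rfl⟩)
        have hnz := hnz1 p (hmem'' p hp).1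
        have h1 := abs_nonneg p.1
        have h2 := abs_nonneg p.2
        have h3 : |p.1| = 0 := by omega
        exact hnz (abs_eq_zero.1 h3)
    have hlen := hperm.length_eq
    rw [hnil] at hlen
    simp only [List.append_nil] at hlen
    omega


def phiF (κ : ℕ) : ℤ → ZMod κ := fun x => -(x : ZMod κ)

def phi (κ : ℕ) (ν : List ℤ) : List (ZMod κ) := ν.map (phiF κ)


def Vp2 (u : ℕ) : Set (List ℤ) :=
  {ν | (∀ x ∈ ν, 0 < x) ∧ 2 ≤ ν.length ∧ ν.sum = 2 * (u:ℤ)}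

def V0' (u : ℕ) : Set (List ℤ) := {ν | ν ∈ V0 (2*u) ∧ ∀ x ∈ ν, x ≠ -(u:ℤ)}

def Vm (u : ℕ) : Set (List ℤ) :=
  {ν | (∀ x ∈ ν, x < 0) ∧ (∀ x ∈ ν, x ≠ -(u:ℤ)) ∧ 3 ≤ ν.length ∧ ν.sum = -(2 * (u:ℤ))}

def Cset (u : ℕ) : Set (List ℤ) := Vp2 u ∪ V0' u ∪ Vm u

def Es (u : ℕ) : Set (List ℤ) := {ν | ν ∈ Vp2 u ∧ (u:ℤ) ∈ ν}

def Xs (u : ℕ) : Set (List ℤ) := {ν | ν ∈ V0 (2*u) ∧ -(u:ℤ) ∈ ν}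

def X3 (u : ℕ) : Set (List ℤ) := {ν | ν ∈ Xs u ∧ 3 ≤ ν.length}

def E3 (u : ℕ) : Set (List ℤ) := {ν | ν ∈ Es u ∧ 3 ≤ ν.length}

def Vt3 (u : ℕ) : Set (List ℤ) := {ν | ν ∈ Vtilde u ∧ 3 ≤ ν.length}

def fup (u : ℕ) : List ℤ → List ℤ := List.map (fun x => if x = -(u:ℤ) then (u:ℤ) else x)

def fdown (u : ℕ) : List ℤ → List ℤ := List.map (fun x => if x = (u:ℤ) then -(u:ℤ) else x)


lemma abs_sum_of_pos {l : List ℤ} (h : ∀ x ∈ l, 0 < x) :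
    (l.map (fun x => |x|)).sum = l.sum := by
  rw [show l.map (fun x => |x|) = l.map id from List.map_congr_left
    (fun x hx => abs_of_pos (h x hx)), List.map_id]


lemma abs_sum_of_neg {l : List ℤ} (h : ∀ x ∈ l, x < 0) :
    (l.map (fun x => |x|)).sum = -l.sum := by
  have : l.map (fun x => |x|) = l.map (fun x => -x) :=
    List.map_congr_left (fun x hx => abs_of_neg (h x hx))
  rw [this]
  induction l with
  | nil => simp
  | cons a t ih =>
    simp only [List.map_cons, List.sum_cons,
      ih (fun x hx => h x (by simp [hx])) (List.map_congr_left
        (fun x hx => abs_of_neg (h x (by simp [hx]))))]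
    ring


lemma abs_lt_of_mem {l : List ℤ} {x : ℤ} {n : ℕ} (hnz : ∀ y ∈ l, y ≠ 0)
    (habs : (l.map (fun y => |y|)).sum = (n:ℤ)) (hlen : l.length ≠ 1) (hx : x ∈ l) :
    |x| < n := by
  classical
  have hperm : l.Perm (x :: l.erase x) := List.perm_cons_erase hx
  have hsum : (l.map (fun y => |y|)).sum = |x| + ((l.erase x).map (fun y => |y|)).sum := by
    rw [(hperm.map (fun y => |y|)).sum_eq]; simp
  have hne : l.erase x ≠ [] := by
    intro hnil
    rw [hnil] at hperm
    exact hlen (hperm.length_eq)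
  have h1 : (1:ℤ) ≤ ((l.erase x).length : ℤ) := by
    have : 1 ≤ (l.erase x).length := List.length_pos_iff.2 hne
    exact_mod_cast this
  have h2 := length_le_abs_sum (l := l.erase x) (fun y hy => hnz y (List.mem_of_mem_erase hy))
  omega


lemma pos_sum_not_mem {r : List ℤ} (h : ∀ x ∈ r, 0 < x) (hs : r.sum = (u:ℤ))
    (hl : 2 ≤ r.length) : (u:ℤ) ∉ r := by
  classical
  intro hmem
  have hperm : r.Perm ((u:ℤ) :: r.erase (u:ℤ)) := List.perm_cons_erase hmem
  have hsum := hperm.sum_eq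
  simp only [List.sum_cons] at hsum
  have hne : r.erase (u:ℤ) ≠ [] := by
    intro hnil
    rw [hnil] at hperm
    have := hperm.length_eq
    simp at this
    omega
  have hpos : 0 < (r.erase (u:ℤ)).sum :=
    List.sum_pos _ (fun x hx => h x (List.mem_of_mem_erase hx)) hne
  omega


lemma v0_short (hu : 1 ≤ u) {ν : List ℤ} (hν : ν ∈ V0 (2*u)) (hl : ν.length ≤ 2) :
    -(u:ℤ) ∈ ν := by
  obtain ⟨hnz, habs, hsum⟩ := hν
  match ν, hl with
  | [], _ => simp at habs; omega
  | [x], _ =>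
    simp at hsum
    exact absurd hsum (hnz x (by simp))
  | [x, y], _ =>
    simp only [List.map_cons, List.map_nil, List.sum_cons, List.sum_nil, add_zero] at habs hsum
    have hy : y = -x := by omega
    have : x = (u:ℤ) ∨ x = -(u:ℤ) := by
      rcases abs_cases x with ⟨h1, _⟩ | ⟨h1, _⟩ <;> rcases abs_cases y with ⟨h2, _⟩ | ⟨h2, _⟩ <;>
        push_cast at habs ⊢ <;> omega
    rcases this with rfl | rfl
    · simp [hy]
    · simp

lemma memC_facts (hu : 1 ≤ u) {ν : List ℤ} (hν : ν ∈ Cset u) :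
    (∀ x ∈ ν, x ≠ 0) ∧ (ν.map (fun x => |x|)).sum = 2*(u:ℤ) ∧ (∀ x ∈ ν, |x| < 2*u) := by
  have h2u : ((2*u : ℕ) : ℤ) = 2*(u:ℤ) := by push_cast; ring
  rcases hν with (⟨hpos, hlen, hsum⟩ | ⟨⟨hnz, habs, hsum⟩, hne⟩) | ⟨hneg, hne, hlen, hsum⟩
  · have hnz : ∀ x ∈ ν, x ≠ 0 := fun x hx => ne_of_gt (hpos x hx)
    have habs : (ν.map (fun x => |x|)).sum = ((2*u : ℕ):ℤ) := by
      rw [abs_sum_of_pos hpos, hsum, h2u]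
    exact ⟨hnz, by rw [habs, h2u], fun x hx => by
      have := abs_lt_of_mem hnz habs (by omega) hx; omega⟩
  · have hlen1 : ν.length ≠ 1 := by
      intro h1
      obtain ⟨x, rfl⟩ := List.length_eq_one_iff.1 h1
      simp at hsum
      exact (hnz x (by simp)) hsum
    rw [h2u] at habs
    exact ⟨hnz, habs, fun x hx => by
      have := abs_lt_of_mem hnz (by rw [habs, h2u]) hlen1 hx; omega⟩
  · have hnz : ∀ x ∈ ν, x ≠ 0 := fun x hx => ne_of_lt (hneg x hx)
    have habs : (ν.map (fun x => |x|)).sum = ((2*u : ℕ):ℤ) := by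
      rw [abs_sum_of_neg hneg, hsum, h2u]; ring
    exact ⟨hnz, by rw [habs, h2u], fun x hx => by
      have := abs_lt_of_mem hnz habs (by omega) hx; omega⟩


lemma memC_no_negu (hu : 1 ≤ u) {ν : List ℤ} (hν : ν ∈ Cset u) : -(u:ℤ) ∉ ν := by
  intro hmem
  rcases hν with (⟨hpos, _, _⟩ | ⟨_, hne⟩) | ⟨_, hne, _, _⟩
  · have := hpos _ hmem; omega
  · exact (hne _ hmem) rfl
  · exact (hne _ hmem) rfl


lemma injOn_phi (hu : 1 ≤ u) : Set.InjOn (phi (2*u)) (Cset u) := by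
  intro ν hν μ hμ h
  have hlen : ν.length = μ.length := by
    have := congrArg List.length h
    simpa [phi] using this
  obtain ⟨hnz1, hs1, hb1⟩ := memC_facts hu hν
  obtain ⟨hnz2, hs2, hb2⟩ := memC_facts hu hμ
  have hzmem : ∀ p ∈ ν.zip μ, p.1 ∈ ν ∧ p.2 ∈ μ := by
    intro p hp
    obtain ⟨h1, h2⟩ := List.of_mem_zip (by rwa [← Prod.mk.eta (p := p)] at hp)
    exact ⟨h1, h2⟩
  have hdvd : ∀ p ∈ ν.zip μ, (2*(u:ℤ)) ∣ (p.1 - p.2) := by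
    intro p hp
    have := zip_map_eq (f := phiF (2*u)) h p hp
    have hcast : ((p.1 : ℤ) : ZMod (2*u)) = ((p.2 : ℤ) : ZMod (2*u)) := by
      have := neg_inj.1 this
      exact this
    have := (ZMod.intCast_eq_intCast_iff _ _ _).1 hcast
    have hdd := Int.ModEq.dvd this
    have hdd2 : ((2*u : ℕ) : ℤ) ∣ p.1 - p.2 := by
      have := dvd_neg.2 hdd
      rwa [neg_sub] at this
    rwa [show ((2*u:ℕ):ℤ) = 2*(u:ℤ) by push_cast; ring] at hdd2
  -- sums over zip
  have hzs1 : ((ν.zip μ).map (fun p => |p.1|)).sum = 2*(u:ℤ) := by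
    have h1 : List.map Prod.fst (ν.zip μ) = ν := List.map_fst_zip (by omega : ν.length ≤ μ.length)
    have : (ν.zip μ).map (fun p => |p.1|) = ν.map (fun x => |x|) := by
      conv_rhs => rw [← h1]
      rw [List.map_map]
      rfl
    rw [this, hs1]
  have hzs2 : ((ν.zip μ).map (fun p => |p.2|)).sum = 2*(u:ℤ) := by
    have h1 : List.map Prod.snd (ν.zip μ) = μ := List.map_snd_zip (by omega : μ.length ≤ ν.length)
    have : (ν.zip μ).map (fun p => |p.2|) = μ.map (fun x => |x|) := by
      conv_rhs => rw [← h1]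
      rw [List.map_map]
      rfl
    rw [this, hs2]
  rcases key_zip hu (ν.zip μ) hdvd
    (fun p hp => by have := hb1 _ (hzmem p hp).1; push_cast; omega)
    (fun p hp => by have := hb2 _ (hzmem p hp).2; push_cast; omega)
    (fun p hp => hnz1 _ (hzmem p hp).1) hzs1 hzs2 with h1 | h2 | h3 | h4
  · exact eq_of_zip hlen h1
  · exact absurd (List.of_mem_zip h2).2 (memC_no_negu hu hμ)
  · exact absurd (List.of_mem_zip h3).1 (memC_no_negu hu hν)
  · -- short case
    have hlν : ν.length ≤ 2 := by
      rw [List.length_zip, hlen, min_self] at h4; omega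
    have hlμ : μ.length ≤ 2 := by omega
    -- neither can be in Vm (length ≥ 3), nor V0' (short V0 lists contain -u)
    have hνp : ν ∈ Vp2 u := by
      rcases hν with (hν | ⟨hν0, hνne⟩) | hν
      · exact hν
      · exact absurd (v0_short hu hν0 hlν) (fun hm => (hνne _ hm) rfl)
      · exact absurd hν.2.2.1 (by omega)
    have hμp : μ ∈ Vp2 u := by
      rcases hμ with (hμ | ⟨hμ0, hμne⟩) | hμ
      · exact hμ
      · exact absurd (v0_short hu hμ0 hlμ) (fun hm => (hμne _ hm) rfl)
      · exact absurd hμ.2.2.1 (by omega)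
    apply eq_of_zip hlen
    intro p hp
    have hp1 : 0 < p.1 := hνp.1 _ (hzmem p hp).1
    have hp2 : 0 < p.2 := hμp.1 _ (hzmem p hp).2
    have hd := hdvd p hp
    have ha1 := hb1 _ (hzmem p hp).1
    have ha2 := hb2 _ (hzmem p hp).2
    have : p.1 - p.2 = 0 := by
      by_contra hne
      have := Int.le_of_dvd (abs_pos.2 hne) ((dvd_abs _ _).2 hd)
      rcases abs_cases p.1 with ⟨e1, _⟩ | ⟨e1, _⟩ <;>
      rcases abs_cases p.2 with ⟨e2, _⟩ | ⟨e2, _⟩ <;>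
      rcases abs_cases (p.1 - p.2) with ⟨e3, _⟩ | ⟨e3, _⟩ <;> push_cast at * <;> omega
    omega

lemma forall2_iff {κ : ℕ} (b : List (ZMod κ)) (ν : List ℤ) :
    List.Forall₂ (fun (bi : ZMod κ) (νi : ℤ) => bi = -(νi : ZMod κ)) b ν ↔ b = phi κ ν := by
  constructor
  · intro h
    have h2 : List.Forall₂ (· = ·) b (ν.map (phiF κ)) := List.forall₂_map_right_iff.2 h
    rw [List.forall₂_eq_eq_eq] at h2
    exact h2
  · rintro rfl
    exact List.forall₂_map_right_iff.1 (by rw [List.forall₂_eq_eq_eq]; rfl)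


lemma phi_sum {κ : ℕ} (ν : List ℤ) : (phi κ ν).sum = -((ν.sum : ℤ) : ZMod κ) := by
  induction ν with
  | nil => simp [phi]
  | cons a t ih =>
    simp only [phi, phiF, List.map_cons, List.sum_cons] at ih ⊢
    rw [ih]
    push_cast
    ring


lemma phiF_ne_zero {κ : ℕ} {x : ℤ} (hnz : x ≠ 0) (hlt : |x| < κ) : phiF κ x ≠ 0 := by
  simp only [phiF, ne_eq, neg_eq_zero]
  rw [ZMod.intCast_zmod_eq_zero_iff_dvd]
  intro hdvd
  have := Int.le_of_dvd (abs_pos.2 hnz) ((dvd_abs _ _).2 hdvd)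
  omega


lemma u_cast_eq : ((u:ℤ) : ZMod (2*u)) = ((-(u:ℤ) : ℤ) : ZMod (2*u)) := by
  refine (ZMod.intCast_eq_intCast_iff _ _ _).2 ((Int.modEq_iff_dvd).2 ?_)
  rw [show -(u:ℤ) - (u:ℤ) = -((2*u:ℕ):ℤ) by push_cast; ring]
  exact dvd_neg.2 dvd_rfl


lemma flip_phi (ν : List ℤ) : phi (2*u) (fup u ν) = phi (2*u) ν := by
  simp only [phi, fup, List.map_map]
  apply List.map_congr_left
  intro x hx
  simp only [Function.comp_apply, phiF]
  by_cases hxe : x = -(u:ℤ)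
  · rw [if_pos hxe, hxe, ← u_cast_eq]
  · rw [if_neg hxe]


lemma fup_perm {ν : List ℤ} (hm : -(u:ℤ) ∈ ν) (hnr : -(u:ℤ) ∉ ν.erase (-(u:ℤ))) :
    (fup u ν).Perm ((u:ℤ) :: ν.erase (-(u:ℤ))) := by
  classical
  have hperm : ν.Perm (-(u:ℤ) :: ν.erase (-(u:ℤ))) := List.perm_cons_erase hm
  have h1 : (fup u ν).Perm (fup u (-(u:ℤ) :: ν.erase (-(u:ℤ)))) := hperm.map _
  have h2 : fup u (-(u:ℤ) :: ν.erase (-(u:ℤ))) = (u:ℤ) :: ν.erase (-(u:ℤ)) := by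
    simp only [fup, List.map_cons, if_pos rfl]
    congr 1
    have hmc : (ν.erase (-(u:ℤ))).map (fun x => if x = -(u:ℤ) then (u:ℤ) else x)
        = (ν.erase (-(u:ℤ))).map id := by
      refine List.map_congr_left (fun x hx => ?_)
      have hne : ¬ (x = -(u:ℤ)) := by intro he; subst he; exact hnr hx
      simp [hne]
    rw [hmc, List.map_id]
  rwa [h2] at h1


lemma v0_flip_mem (hu : 1 ≤ u) {ν : List ℤ} (hν : ν ∈ V0 (2*u)) (hm : -(u:ℤ) ∈ ν) :
    fup u ν ∈ Vp2 u := by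
  classical
  obtain ⟨hnz, habs, hsum⟩ := hν
  set r := ν.erase (-(u:ℤ)) with hr
  have hperm : ν.Perm (-(u:ℤ) :: r) := List.perm_cons_erase hm
  have hsum' : r.sum = (u:ℤ) := by
    have := hperm.sum_eq
    simp only [List.sum_cons] at this
    omega
  have habs' : (r.map (fun x => |x|)).sum = (u:ℤ) := by
    have := (hperm.map (fun x => |x|)).sum_eq
    simp only [List.map_cons, List.sum_cons] at this
    rw [habs] at this
    have hau : |(-(u:ℤ))| = (u:ℤ) := by rw [abs_neg, abs_of_nonneg (by positivity)]
    push_cast at this ⊢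
    omega
  have hrnz : ∀ x ∈ r, x ≠ 0 := fun x hx => hnz x (List.mem_of_mem_erase hx)
  have hrpos : ∀ x ∈ r, 0 < x := all_pos_of_abs_sum_eq hrnz (by rw [habs', hsum'])
  have hnr : -(u:ℤ) ∉ r := fun hmem => by have := hrpos _ hmem; omega
  have hfp := fup_perm hm hnr
  rw [← hr] at hfp
  refine ⟨?_, ?_, ?_⟩
  · intro x hx
    have : x ∈ (u:ℤ) :: r := hfp.mem_iff.1 hx
    rcases List.mem_cons.1 this with rfl | hxr
    · exact_mod_cast hu
    · exact hrpos x hxr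
  · have h1 := hfp.length_eq
    have hrne : r ≠ [] := by
      intro hnil
      rw [hnil] at hsum'
      simp at hsum'
      omega
    have : 1 ≤ r.length := List.length_pos_iff.2 hrne
    simp only [List.length_cons] at h1
    omega
  · rw [hfp.sum_eq]
    simp only [List.sum_cons]
    omega


lemma vm_flip_mem (hu : 1 ≤ u) {ν : List ℤ} (hneg : ∀ x ∈ ν, x < 0)
    (habs : (ν.map (fun x => |x|)).sum = 2*(u:ℤ)) (hsum : ν.sum = -(2*(u:ℤ)))
    (hlen : 3 ≤ ν.length) (hm : -(u:ℤ) ∈ ν) : fup u ν ∈ V0' u := by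
  classical
  set r := ν.erase (-(u:ℤ)) with hr
  have hperm : ν.Perm (-(u:ℤ) :: r) := List.perm_cons_erase hm
  have hsum' : r.sum = -(u:ℤ) := by
    have := hperm.sum_eq
    simp only [List.sum_cons] at this
    omega
  have habs' : (r.map (fun x => |x|)).sum = (u:ℤ) := by
    have := (hperm.map (fun x => |x|)).sum_eq
    simp only [List.map_cons, List.sum_cons] at this
    rw [habs] at this
    have hau : |(-(u:ℤ))| = (u:ℤ) := by rw [abs_neg, abs_of_nonneg (by positivity)]
    omega
  have hrnz : ∀ x ∈ r, x ≠ 0 := fun x hx => ne_of_lt (hneg x (List.mem_of_mem_erase hx))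
  have hrlen : 2 ≤ r.length := by
    have := hperm.length_eq
    simp only [List.length_cons] at this
    omega
  have hnr : -(u:ℤ) ∉ r := by
    intro hmem
    have h1 := abs_lt_of_mem (n := u) hrnz habs' (by omega) hmem
    rw [abs_neg, abs_of_nonneg (by positivity : (0:ℤ) ≤ (u:ℤ))] at h1
    omega
  have hfp := fup_perm hm hnr
  rw [← hr] at hfp
  refine ⟨⟨?_, ?_, ?_⟩, ?_⟩
  · intro x hx
    rcases List.mem_cons.1 (hfp.mem_iff.1 hx) with rfl | hxr
    · positivity
    · exact hrnz x hxr
  · rw [(hfp.map (fun x => |x|)).sum_eq]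
    simp only [List.map_cons, List.sum_cons]
    rw [habs']
    rw [abs_of_nonneg (by positivity : (0:ℤ) ≤ (u:ℤ))]
    push_cast
    ring
  · rw [hfp.sum_eq]
    simp only [List.sum_cons]
    omega
  · intro x hx
    rcases List.mem_cons.1 (hfp.mem_iff.1 hx) with rfl | hxr
    · intro h; omega
    · exact fun he => hnr (he ▸ hxr)


lemma image_eq (hu : 1 ≤ u) : Bset (2*u) = phi (2*u) '' Cset u := by
  have h2u : ((2*u : ℕ) : ℤ) = 2*(u:ℤ) := by push_cast; ring
  apply Set.Subset.antisymm
  · rintro b ⟨hb0, hbsum, ν, hν0, hνabs, hf2⟩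
    rw [forall2_iff] at hf2
    subst hf2
    rw [h2u] at hνabs
    -- entries bounded
    have hndvd : ∀ x ∈ ν, ¬ ((2*(u:ℤ)) ∣ x) := by
      intro x hx hdvd
      have hmem : phiF (2*u) x ∈ phi (2*u) ν := List.mem_map_of_mem hx
      apply hb0 _ hmem
      simp only [phiF, neg_eq_zero]
      rw [ZMod.intCast_zmod_eq_zero_iff_dvd]
      rwa [h2u]
    have hlt : ∀ x ∈ ν, |x| < 2*(u:ℤ) := by
      intro x hx
      have h1 : |x| ≤ 2*(u:ℤ) := by
        have := abs_le_abs_sum hx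
        omega
      rcases lt_or_eq_of_le h1 with h | h
      · exact h
      · exfalso
        apply hndvd x hx
        rcases abs_eq (by positivity : (0:ℤ) ≤ 2*(u:ℤ)) |>.1 h with rfl | rfl
        · exact dvd_rfl
        · exact dvd_neg.2 dvd_rfl
    -- sum is multiple of 2u, bounded
    have hsdvd : (2*(u:ℤ)) ∣ ν.sum := by
      rw [phi_sum] at hbsum
      have : ((ν.sum : ℤ) : ZMod (2*u)) = 0 := by
        rwa [neg_eq_zero] at hbsum
      rw [ZMod.intCast_zmod_eq_zero_iff_dvd] at this
      rwa [h2u] at this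
    have hsb : |ν.sum| ≤ 2*(u:ℤ) := by
      have := abs_list_sum_le (l := ν)
      omega
    have hupos : (0:ℤ) < (u:ℤ) := by exact_mod_cast hu
    obtain ⟨c, hc⟩ := hsdvd
    have habs_le := abs_le.1 hsb
    have hcb : c = 0 ∨ c = 1 ∨ c = -1 := by
      by_contra hcon
      push_neg at hcon
      obtain ⟨h0, hp, hm⟩ := hcon
      have hor : 2 ≤ c ∨ c ≤ -2 := by omega
      rcases hor with h | h <;> nlinarith
    have hνnz : ∀ x ∈ ν, x ≠ 0 := hν0
    rcases hcb with rfl | rfl | rfl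
    · -- sum = 0 : V0 case
      simp only [mul_zero] at hc
      have hν0' : ν ∈ V0 (2*u) := ⟨hν0, by rw [hνabs, h2u], hc⟩
      by_cases hm : -(u:ℤ) ∈ ν
      · exact ⟨fup u ν, Or.inl (Or.inl (v0_flip_mem hu hν0' hm)), flip_phi ν⟩
      · exact ⟨ν, Or.inl (Or.inr ⟨hν0', fun x hx he => hm (he ▸ hx)⟩), rfl⟩
    · -- sum = 2u : Vp2 case
      rw [mul_one] at hc
      have hpos : ∀ x ∈ ν, 0 < x := all_pos_of_abs_sum_eq hν0 (by rw [hνabs, hc])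
      have hlen : 2 ≤ ν.length := by
        match ν, hc with
        | [], hc => simp at hc; omega
        | [x], hc =>
          exfalso
          have := hlt x (by simp)
          simp at hc
          rcases abs_cases x with ⟨h1, _⟩ | ⟨h1, _⟩ <;> omega
        | x :: y :: t, _ => simp
      exact ⟨ν, Or.inl (Or.inl ⟨hpos, hlen, hc⟩), rfl⟩
    · -- sum = -2u
      have hc' : ν.sum = -(2*(u:ℤ)) := by omega
      have hneg : ∀ x ∈ ν, x < 0 := all_neg_of_abs_sum_eq hν0 (by rw [hνabs, hc']; ring)
      match ν, hc', hνabs, hneg, hlt, hν0 with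
      | [], hc', hνabs, _, _, _ => exfalso; simp at hc'; omega
      | [x], hc', hνabs, _, hlt, _ =>
        exfalso
        have := hlt x (by simp)
        simp at hc'
        rcases abs_cases x with ⟨h1, _⟩ | ⟨h1, _⟩ <;> omega
      | [x, y], hc', hνabs, hneg, hlt, _ =>
        refine ⟨[x + 2*(u:ℤ), y + 2*(u:ℤ)], Or.inl (Or.inl ⟨?_, by simp, ?_⟩), ?_⟩
        · intro w hw
          have h1 := hlt x (by simp)
          have h2 := hlt y (by simp)
          have hw' : w = x + 2*(u:ℤ) ∨ w = y + 2*(u:ℤ) := by simpa using hw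
          rcases hw' with rfl | rfl
          · rcases abs_cases x with ⟨e, _⟩ | ⟨e, _⟩ <;> omega
          · rcases abs_cases y with ⟨e, _⟩ | ⟨e, _⟩ <;> omega
        · simp only [List.sum_cons, List.sum_nil] at hc' ⊢
          omega
        · simp only [phi, phiF, List.map_cons, List.map_nil]
          have hcast : ∀ z : ℤ, ((z + 2*(u:ℤ) : ℤ) : ZMod (2*u)) = (z : ZMod (2*u)) := by
            intro z
            push_cast
            rw [show ((2:ZMod (2*u)) * (u:ZMod (2*u))) = ((2*u : ℕ) : ZMod (2*u)) by push_cast; ring]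
            rw [ZMod.natCast_self]
            ring
          rw [hcast x, hcast y]
      | x :: y :: z :: t, hc', hνabs, hneg, hlt, hν0 =>
        set ν' := x :: y :: z :: t with hν'
        have hlen3 : 3 ≤ ν'.length := by simp [hν']
        by_cases hm : -(u:ℤ) ∈ ν'
        · exact ⟨fup u ν', Or.inl (Or.inr (vm_flip_mem hu hneg (by rw [hνabs]) hc' hlen3 hm)),
            flip_phi ν'⟩
        · exact ⟨ν', Or.inr ⟨hneg, fun w hw he => hm (he ▸ hw), hlen3, hc'⟩, rfl⟩
  · rintro b ⟨ν, hν, rfl⟩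
    obtain ⟨hnz, habs, hbd⟩ := memC_facts hu hν
    have hsdvd : (2*(u:ℤ)) ∣ ν.sum := by
      rcases hν with (⟨_, _, hsum⟩ | ⟨⟨_, _, hsum⟩, _⟩) | ⟨_, _, _, hsum⟩
      · rw [hsum]
      · rw [hsum]; exact dvd_zero _
      · rw [hsum]; exact dvd_neg.2 dvd_rfl
    refine ⟨?_, ?_, ν, hnz, by rw [habs, h2u], (forall2_iff _ _).2 rfl⟩
    · intro x hx
      obtain ⟨z, hz, rfl⟩ := List.mem_map.1 hx
      exact phiF_ne_zero (hnz z hz) (by rw [h2u]; exact hbd z hz)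
    · rw [phi_sum, neg_eq_zero, ZMod.intCast_zmod_eq_zero_iff_dvd]
      rwa [h2u]

def Vt2 (u : ℕ) : Set (List ℤ) :=
  (fun a : ℤ => [a, 2*(u:ℤ) - a]) '' {a : ℤ | 0 < a ∧ a < 2*(u:ℤ) ∧ a ≠ (u:ℤ)}

lemma fdown_perm {μ : List ℤ} (hm : (u:ℤ) ∈ μ) (hnr : (u:ℤ) ∉ μ.erase (u:ℤ)) :
    (fdown u μ).Perm (-(u:ℤ) :: μ.erase (u:ℤ)) := by
  classical
  have hperm : μ.Perm ((u:ℤ) :: μ.erase (u:ℤ)) := List.perm_cons_erase hm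
  have h1 : (fdown u μ).Perm (fdown u ((u:ℤ) :: μ.erase (u:ℤ))) := hperm.map _
  have h2 : fdown u ((u:ℤ) :: μ.erase (u:ℤ)) = -(u:ℤ) :: μ.erase (u:ℤ) := by
    simp only [fdown, List.map_cons, if_pos rfl]
    congr 1
    have hmc : (μ.erase (u:ℤ)).map (fun x => if x = (u:ℤ) then -(u:ℤ) else x)
        = (μ.erase (u:ℤ)).map id := by
      refine List.map_congr_left (fun x hx => ?_)
      have hne : ¬ (x = (u:ℤ)) := by intro he; subst he; exact hnr hx
      simp [hne]
    rw [hmc, List.map_id]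
  rwa [h2] at h1


lemma x3_facts (hu : 1 ≤ u) {ν : List ℤ} (hν : ν ∈ X3 u) :
    (∀ x ∈ ν.erase (-(u:ℤ)), 0 < x) ∧ (ν.erase (-(u:ℤ))).sum = (u:ℤ) ∧
    (u:ℤ) ∉ ν ∧ -(u:ℤ) ∉ ν.erase (-(u:ℤ)) := by
  classical
  obtain ⟨⟨⟨hnz, habs, hsum⟩, hm⟩, hlen⟩ := hν
  set r := ν.erase (-(u:ℤ)) with hr
  have hperm : ν.Perm (-(u:ℤ) :: r) := List.perm_cons_erase hm
  have hsum' : r.sum = (u:ℤ) := by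
    have := hperm.sum_eq; simp only [List.sum_cons] at this; omega
  have habs' : (r.map (fun x => |x|)).sum = (u:ℤ) := by
    have := (hperm.map (fun x => |x|)).sum_eq
    simp only [List.map_cons, List.sum_cons] at this
    rw [habs] at this
    have hau : |(-(u:ℤ))| = (u:ℤ) := by
      rw [abs_neg, abs_of_nonneg (by positivity)]
    push_cast at this ⊢
    omega
  have hrnz : ∀ x ∈ r, x ≠ 0 := fun x hx => hnz x (List.mem_of_mem_erase hx)
  have hrpos : ∀ x ∈ r, 0 < x := all_pos_of_abs_sum_eq hrnz (by rw [habs', hsum'])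
  have hrlen : 2 ≤ r.length := by
    have := hperm.length_eq; simp only [List.length_cons] at this; omega
  have hur : (u:ℤ) ∉ r := pos_sum_not_mem hrpos hsum' hrlen
  have hnr : -(u:ℤ) ∉ r := fun hmem => by have := hrpos _ hmem; omega
  refine ⟨hrpos, hsum', ?_, hnr⟩
  intro humem
  rcases List.mem_cons.1 (hperm.mem_iff.1 humem) with he | hur2
  · have : (0:ℤ) < u := by exact_mod_cast hu
    omega
  · exact hur hur2


lemma e3_facts (hu : 1 ≤ u) {μ : List ℤ} (hμ : μ ∈ E3 u) :
    (∀ x ∈ μ.erase (u:ℤ), 0 < x) ∧ (μ.erase (u:ℤ)).sum = (u:ℤ) ∧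
    (u:ℤ) ∉ μ.erase (u:ℤ) ∧ -(u:ℤ) ∉ μ := by
  classical
  obtain ⟨⟨⟨hpos, hlen2, hsum⟩, hm⟩, hlen⟩ := hμ
  set s := μ.erase (u:ℤ) with hs
  have hperm : μ.Perm ((u:ℤ) :: s) := List.perm_cons_erase hm
  have hspos : ∀ x ∈ s, 0 < x := fun x hx => hpos x (List.mem_of_mem_erase hx)
  have hsum' : s.sum = (u:ℤ) := by
    have := hperm.sum_eq; simp only [List.sum_cons] at this; omega
  have hslen : 2 ≤ s.length := by
    have := hperm.length_eq; simp only [List.length_cons] at this; omega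
  refine ⟨hspos, hsum', pos_sum_not_mem hspos hsum' hslen, ?_⟩
  intro hmem
  have := hpos _ hmem
  have : (0:ℤ) < u := by exact_mod_cast hu
  omega


lemma fdown_fup {ν : List ℤ} (hnu : (u:ℤ) ∉ ν) : fdown u (fup u ν) = ν := by
  simp only [fdown, fup, List.map_map]
  have : ν.map ((fun x => if x = (u:ℤ) then -(u:ℤ) else x) ∘
      (fun x => if x = -(u:ℤ) then (u:ℤ) else x)) = ν.map id := by
    refine List.map_congr_left (fun x hx => ?_)
    simp only [Function.comp_apply, id_eq]
    by_cases he : x = -(u:ℤ)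
    · rw [if_pos he, if_pos rfl, he]
    · have hne2 : ¬ (x = (u:ℤ)) := by intro h2; subst h2; exact hnu hx
      rw [if_neg he, if_neg hne2]
  rw [this, List.map_id]


lemma fup_fdown {μ : List ℤ} (hnu : -(u:ℤ) ∉ μ) : fup u (fdown u μ) = μ := by
  simp only [fdown, fup, List.map_map]
  have : μ.map ((fun x => if x = -(u:ℤ) then (u:ℤ) else x) ∘
      (fun x => if x = (u:ℤ) then -(u:ℤ) else x)) = μ.map id := by
    refine List.map_congr_left (fun x hx => ?_)
    simp only [Function.comp_apply, id_eq]
    by_cases he : x = (u:ℤ)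
    · rw [if_pos he, if_pos rfl, he]
    · have hne2 : ¬ (x = -(u:ℤ)) := by intro h2; subst h2; exact hnu hx
      rw [if_neg he, if_neg hne2]
  rw [this, List.map_id]


lemma fup_mem_E3 (hu : 1 ≤ u) {ν : List ℤ} (hν : ν ∈ X3 u) : fup u ν ∈ E3 u := by
  obtain ⟨hrpos, hrsum, hunu, hnr⟩ := x3_facts hu hν
  obtain ⟨⟨⟨hnz, habs, hsum⟩, hm⟩, hlen⟩ := hν
  have hfp := fup_perm hm hnr
  have hul : (0:ℤ) < (u:ℤ) := by exact_mod_cast hu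
  refine ⟨⟨⟨?_, ?_, ?_⟩, ?_⟩, ?_⟩
  · intro x hx
    rcases List.mem_cons.1 (hfp.mem_iff.1 hx) with rfl | hxr
    · exact hul
    · exact hrpos x hxr
  · have h1 := hfp.length_eq
    have h2 : (fup u ν).length = ν.length := by simp [fup]
    omega
  · rw [hfp.sum_eq]; simp only [List.sum_cons]; omega
  · exact hfp.mem_iff.2 (by simp)
  · have h2 : (fup u ν).length = ν.length := by simp [fup]
    omega


lemma fdown_mem_X3 (hu : 1 ≤ u) {μ : List ℤ} (hμ : μ ∈ E3 u) : fdown u μ ∈ X3 u := by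
  obtain ⟨hspos, hssum, hus, hnm⟩ := e3_facts hu hμ
  obtain ⟨⟨⟨hpos, hlen2, hsum⟩, hm⟩, hlen⟩ := hμ
  have hfp := fdown_perm hm hus
  have hul : (0:ℤ) < (u:ℤ) := by exact_mod_cast hu
  have habs2 : ((μ.erase (u:ℤ)).map (fun x => |x|)).sum = (u:ℤ) := by
    rw [abs_sum_of_pos hspos, hssum]
  refine ⟨⟨⟨?_, ?_, ?_⟩, ?_⟩, ?_⟩
  · intro x hx
    rcases List.mem_cons.1 (hfp.mem_iff.1 hx) with rfl | hxr
    · omega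
    · exact ne_of_gt (hspos x hxr)
  · rw [(hfp.map (fun x => |x|)).sum_eq]
    simp only [List.map_cons, List.sum_cons]
    rw [habs2, abs_neg, abs_of_nonneg (le_of_lt hul)]
    push_cast
    ring
  · rw [hfp.sum_eq]; simp only [List.sum_cons]; omega
  · exact hfp.mem_iff.2 (by simp)
  · have h2 : (fdown u μ).length = μ.length := by simp [fdown]
    omega


lemma ncard_X3_eq_E3 (hu : 1 ≤ u) : (X3 u).ncard = (E3 u).ncard := by
  have himg : E3 u = fup u '' X3 u := by
    apply Set.Subset.antisymm
    · intro μ hμ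
      refine ⟨fdown u μ, fdown_mem_X3 hu hμ, ?_⟩
      exact fup_fdown (e3_facts hu hμ).2.2.2
    · rintro _ ⟨ν, hν, rfl⟩
      exact fup_mem_E3 hu hν
  rw [himg]
  symm
  apply Set.ncard_image_of_injOn
  intro a ha b hb h
  have h1 := fdown_fup (x3_facts hu ha).2.2.1
  have h2 := fdown_fup (x3_facts hu hb).2.2.1
  rw [← h1, ← h2, h]

lemma v0_two (hu : 1 ≤ u) {ν : List ℤ} (hν : ν ∈ V0 (2*u)) (hl : ν.length ≤ 2) :
    ν = [(u:ℤ), -(u:ℤ)] ∨ ν = [-(u:ℤ), (u:ℤ)] := by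
  obtain ⟨hnz, habs, hsum⟩ := hν
  have h2u : ((2*u : ℕ) : ℤ) = 2*(u:ℤ) := by push_cast; ring
  rw [h2u] at habs
  have hul : (0:ℤ) < (u:ℤ) := by exact_mod_cast hu
  match ν, hl, hnz, habs, hsum with
  | [], _, _, habs, _ => exfalso; simp at habs; omega
  | [x], _, hnz, _, hsum => exact absurd (by simpa using hsum) (hnz x (by simp))
  | [x, y], _, hnz, habs, hsum =>
    simp only [List.map_cons, List.map_nil, List.sum_cons, List.sum_nil, add_zero] at habs hsum
    have hy : y = -x := by omega
    have hx : x = (u:ℤ) ∨ x = -(u:ℤ) := by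
      rcases abs_cases x with ⟨h1, _⟩ | ⟨h1, _⟩ <;> rcases abs_cases y with ⟨h2, _⟩ | ⟨h2, _⟩ <;>
        omega
    rcases hx with rfl | rfl
    · left; rw [hy]
    · right; rw [hy]; norm_num


lemma es_two (hu : 1 ≤ u) {μ : List ℤ} (hμ : μ ∈ Es u) (hl : μ.length ≤ 2) :
    μ = [(u:ℤ), (u:ℤ)] := by
  obtain ⟨⟨hpos, hlen, hsum⟩, hm⟩ := hμ
  match μ, hlen, hl, hsum, hm with
  | [x, y], _, _, hsum, hm =>
    simp only [List.sum_cons, List.sum_nil, add_zero] at hsum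
    have hm' : (u:ℤ) = x ∨ (u:ℤ) = y := by simpa using hm
    rcases hm' with h | h
    · have hy : y = (u:ℤ) := by omega
      rw [← h, hy]
    · have hx : x = (u:ℤ) := by omega
      rw [hx, ← h]


lemma xs_decomp (hu : 1 ≤ u) :
    Xs u = ({[(u:ℤ), -(u:ℤ)], [-(u:ℤ), (u:ℤ)]} : Set (List ℤ)) ∪ X3 u := by
  have hul : (0:ℤ) < (u:ℤ) := by exact_mod_cast hu
  have h2u : ((2*u : ℕ) : ℤ) = 2*(u:ℤ) := by push_cast; ring
  apply Set.Subset.antisymm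
  · intro ν hν
    by_cases hl : ν.length ≤ 2
    · left
      rcases v0_two hu hν.1 hl with rfl | rfl <;> simp
    · right
      exact ⟨hν, by omega⟩
  · rintro ν (h | h)
    · have habs : ∀ w : List ℤ, w = [(u:ℤ), -(u:ℤ)] ∨ w = [-(u:ℤ), (u:ℤ)] → w ∈ Xs u := by
        rintro w (rfl | rfl) <;>
        · refine ⟨⟨?_, ?_, ?_⟩, ?_⟩
          · intro x hx
            simp only [List.mem_cons, List.mem_singleton, List.not_mem_nil, or_false] at hx
            rcases hx with rfl | rfl <;> omega
          · simp only [List.map_cons, List.map_nil, List.sum_cons, List.sum_nil, add_zero,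
              abs_neg, abs_of_nonneg (le_of_lt hul), h2u]
            ring
          · simp
          · simp
      exact habs ν (by simpa using h)
    · exact h.1


lemma es_decomp (hu : 1 ≤ u) :
    Es u = ({[(u:ℤ), (u:ℤ)]} : Set (List ℤ)) ∪ E3 u := by
  have hul : (0:ℤ) < (u:ℤ) := by exact_mod_cast hu
  apply Set.Subset.antisymm
  · intro μ hμ
    by_cases hl : μ.length ≤ 2
    · left; exact es_two hu hμ hl
    · right; exact ⟨hμ, by omega⟩
  · rintro μ (h | h)
    · rw [Set.mem_singleton_iff] at h
      subst h
      refine ⟨⟨?_, by simp, by simp [two_mul]⟩, by simp⟩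
      intro x hx
      simp only [List.mem_cons, List.not_mem_nil, or_false] at hx
      rcases hx with rfl | rfl <;> omega
    · exact h.1


lemma vp2_decomp : Vp2 u = Vtilde u ∪ Es u := by
  apply Set.Subset.antisymm
  · intro ν hν
    by_cases hm : (u:ℤ) ∈ ν
    · right; exact ⟨hν, hm⟩
    · left; exact ⟨hν.1, fun x hx he => hm (he ▸ hx), hν.2.1, hν.2.2⟩
  · rintro ν (h | h)
    · exact ⟨h.1, h.2.2.1, h.2.2.2⟩
    · exact h.1


lemma v0_decomp : V0 (2*u) = V0' u ∪ Xs u := by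
  apply Set.Subset.antisymm
  · intro ν hν
    by_cases hm : -(u:ℤ) ∈ ν
    · right; exact ⟨hν, hm⟩
    · left; exact ⟨hν, fun x hx he => hm (he ▸ hx)⟩
  · rintro ν (h | h)
    · exact h.1
    · exact h.1


lemma vt_decomp (hu : 1 ≤ u) : Vtilde u = Vt2 u ∪ Vt3 u := by
  apply Set.Subset.antisymm
  · intro ν hν
    obtain ⟨hpos, hne, hlen, hsum⟩ := hν
    by_cases hl : ν.length ≤ 2
    · left
      have hl2 : ν.length = 2 := by omega
      match ν, hl2, hpos, hne, hsum with
      | [x, y], _, hpos, hne, hsum =>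
        simp only [List.sum_cons, List.sum_nil, add_zero] at hsum
        refine ⟨x, ⟨hpos x (by simp), ?_, hne x (by simp)⟩, ?_⟩
        · have := hpos y (by simp); omega
        · have : y = 2*(u:ℤ) - x := by omega
          rw [this]
    · right; exact ⟨⟨hpos, hne, hlen, hsum⟩, by omega⟩
  · rintro ν (⟨a, ⟨ha1, ha2, ha3⟩, rfl⟩ | h)
    · refine ⟨?_, ?_, by simp, by simp⟩
      · intro x hx
        rcases (by simpa using hx : x = a ∨ x = 2*(u:ℤ) - a) with rfl | rfl <;> omega
      · intro x hx
        rcases (by simpa using hx : x = a ∨ x = 2*(u:ℤ) - a) with rfl | rfl <;> omega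
    · exact h.1


lemma vm_eq_image : Vm u = (List.map (fun x : ℤ => -x)) '' Vt3 u := by
  apply Set.Subset.antisymm
  · intro ν hν
    obtain ⟨hneg, hne, hlen, hsum⟩ := hν
    refine ⟨ν.map (fun x => -x), ⟨⟨?_, ?_, by simp only [List.length_map]; omega, ?_⟩,
      by simp only [List.length_map]; omega⟩, ?_⟩
    · intro x hx
      obtain ⟨y, hy, rfl⟩ := List.mem_map.1 hx
      have := hneg y hy; omega
    · intro x hx
      obtain ⟨y, hy, rfl⟩ := List.mem_map.1 hx
      have := hne y hy
      intro he
      apply this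
      omega
    · rw [sum_map_neg' (fun x : ℤ => x)]
      simp only [List.map_id']
      omega
    · rw [List.map_map]
      have : ν.map ((fun x : ℤ => -x) ∘ (fun x : ℤ => -x)) = ν.map id :=
        List.map_congr_left (fun x _ => by simp)
      rw [this, List.map_id]
  · rintro _ ⟨ν, ⟨⟨hpos, hne, hlen, hsum⟩, hlen3⟩, rfl⟩
    refine ⟨?_, ?_, by simpa using hlen3, ?_⟩
    · intro x hx
      obtain ⟨y, hy, rfl⟩ := List.mem_map.1 hx
      have := hpos y hy; omega
    · intro x hx
      obtain ⟨y, hy, rfl⟩ := List.mem_map.1 hx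
      have := hne y hy
      intro he; apply this; omega
    · rw [sum_map_neg' (fun x : ℤ => x)]
      simp only [List.map_id']
      omega


lemma ncard_vm : (Vm u).ncard = (Vt3 u).ncard := by
  rw [vm_eq_image]
  apply Set.ncard_image_of_injOn
  intro a _ b _ h
  have := congrArg (List.map (fun x : ℤ => -x)) h
  simpa [List.map_map, List.map_congr_left (fun x (_ : x ∈ a) => neg_neg x),
    List.map_congr_left (fun x (_ : x ∈ b) => neg_neg x)] using this


lemma ncard_vt2 (hu : 1 ≤ u) : (Vt2 u).ncard = 2*u - 2 := by
  have h1 : (Vt2 u).ncard = {a : ℤ | 0 < a ∧ a < 2*(u:ℤ) ∧ a ≠ (u:ℤ)}.ncard := by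
    apply Set.ncard_image_of_injOn
    intro a _ b _ h
    injection h
  have h2 : {a : ℤ | 0 < a ∧ a < 2*(u:ℤ) ∧ a ≠ (u:ℤ)}
      = ↑((Finset.Ioo (0:ℤ) (2*(u:ℤ))).erase (u:ℤ)) := by
    ext a
    simp only [Set.mem_setOf_eq, Finset.coe_erase, Set.mem_diff, Finset.mem_coe,
      Finset.mem_Ioo, Set.mem_singleton_iff]
    tauto
  rw [h1, h2, Set.ncard_coe_finset, Finset.card_erase_of_mem (by
    simp only [Finset.mem_Ioo]
    omega)]
  rw [Int.card_Ioo]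
  omega

end CBE

/-- For u ≥ 1, |B_{2u}| = |V⁰_{2u}| + 2|Ṽ⁺_{2u}| - 2u + 1. -/
theorem card_Bset_even (u : ℕ) (hu : 1 ≤ u) :
    (Set.ncard (Bset (2 * u)) : ℤ)
      = (Set.ncard (V0 (2 * u)) : ℤ) + 2 * (Set.ncard (Vtilde u) : ℤ)
        - 2 * (u : ℤ) + 1 := by
  classical
  have h2u : ((2*u : ℕ) : ℤ) = 2*(u:ℤ) := by push_cast; ring
  have hul : (0:ℤ) < (u:ℤ) := by exact_mod_cast hu
  have hMfin := CBE.finite_master (2*u)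
  have hVp2f : (CBE.Vp2 u).Finite := hMfin.subset (fun ν hν =>
    ⟨fun x hx => ne_of_gt (hν.1 x hx), by rw [CBE.abs_sum_of_pos hν.1, hν.2.2, h2u]⟩)
  have hV0f : (V0 (2*u)).Finite := hMfin.subset (fun ν hν => ⟨hν.1, hν.2.1⟩)
  have hVmf : (CBE.Vm u).Finite := hMfin.subset (fun ν hν =>
    ⟨fun x hx => ne_of_lt (hν.1 x hx), by rw [CBE.abs_sum_of_neg hν.1, hν.2.2.2, h2u]; ring⟩)
  have hVtf : (Vtilde u).Finite := hVp2f.subset (fun ν hν => ⟨hν.1, hν.2.2.1, hν.2.2.2⟩)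
  have hV0'f : (CBE.V0' u).Finite := hV0f.subset (fun ν hν => hν.1)
  have hXsf : (CBE.Xs u).Finite := hV0f.subset (fun ν hν => hν.1)
  have hEsf : (CBE.Es u).Finite := hVp2f.subset (fun ν hν => hν.1)
  have hX3f : (CBE.X3 u).Finite := hXsf.subset (fun ν hν => hν.1)
  have hE3f : (CBE.E3 u).Finite := hEsf.subset (fun ν hν => hν.1)
  have hVt3f : (CBE.Vt3 u).Finite := hVtf.subset (fun ν hν => hν.1)
  have hVt2f : (CBE.Vt2 u).Finite :=
    hVtf.subset (by rw [CBE.vt_decomp hu]; exact Set.subset_union_left)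
  have hBC : (Bset (2*u)).ncard = (CBE.Cset u).ncard := by
    rw [CBE.image_eq hu]
    exact Set.ncard_image_of_injOn (CBE.injOn_phi hu)
  have hdisj1 : Disjoint (CBE.Vp2 u) (CBE.V0' u) := by
    rw [Set.disjoint_left]
    rintro ν ⟨_, _, hsum⟩ ⟨⟨_, _, hsum0⟩, _⟩
    rw [hsum0] at hsum
    omega
  have hdisj2 : Disjoint (CBE.Vp2 u ∪ CBE.V0' u) (CBE.Vm u) := by
    rw [Set.disjoint_left]
    rintro ν (⟨_, _, hsum⟩ | ⟨⟨_, _, hsum0⟩, _⟩) ⟨_, _, _, hsumm⟩ <;> omega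
  have hC : (CBE.Cset u).ncard = (CBE.Vp2 u).ncard + (CBE.V0' u).ncard + (CBE.Vm u).ncard := by
    have e1 : (CBE.Vp2 u ∪ CBE.V0' u).ncard = (CBE.Vp2 u).ncard + (CBE.V0' u).ncard :=
      Set.ncard_union_eq hdisj1 hVp2f hV0'f
    rw [show CBE.Cset u = (CBE.Vp2 u ∪ CBE.V0' u) ∪ CBE.Vm u from rfl,
      Set.ncard_union_eq hdisj2 (hVp2f.union hV0'f) hVmf, e1]
  have hVp2c : (CBE.Vp2 u).ncard = (Vtilde u).ncard + (CBE.Es u).ncard := by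
    rw [CBE.vp2_decomp, Set.ncard_union_eq ?_ hVtf hEsf]
    rw [Set.disjoint_left]
    rintro ν ⟨_, hne, _, _⟩ ⟨_, hm⟩
    exact (hne _ hm) rfl
  have hV0c : (V0 (2*u)).ncard = (CBE.V0' u).ncard + (CBE.Xs u).ncard := by
    rw [CBE.v0_decomp, Set.ncard_union_eq ?_ hV0'f hXsf]
    rw [Set.disjoint_left]
    rintro ν ⟨_, hne⟩ ⟨_, hm⟩
    exact (hne _ hm) rfl
  have hXsc : (CBE.Xs u).ncard = 2 + (CBE.X3 u).ncard := by
    rw [CBE.xs_decomp hu, Set.ncard_union_eq ?_ ((Set.finite_singleton _).insert _) hX3f]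
    · rw [Set.ncard_pair ?_]
      intro h
      have : (u:ℤ) = -(u:ℤ) := by
        have := congrArg (fun l : List ℤ => l.headI) h
        simpa using this
      omega
    · rw [Set.disjoint_left]
      rintro ν hp ⟨_, h3⟩
      rcases (by simpa using hp : ν = [(u:ℤ), -(u:ℤ)] ∨ ν = [-(u:ℤ), (u:ℤ)]) with rfl | rfl <;>
        simp at h3
  have hEsc : (CBE.Es u).ncard = 1 + (CBE.E3 u).ncard := by
    rw [CBE.es_decomp hu, Set.ncard_union_eq ?_ (Set.finite_singleton _) hE3f,
      Set.ncard_singleton]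
    rw [Set.disjoint_left]
    rintro ν hp ⟨_, h3⟩
    rcases (by simpa using hp : ν = [(u:ℤ), (u:ℤ)]) with rfl
    simp at h3
  have hVtc : (Vtilde u).ncard = (CBE.Vt2 u).ncard + (CBE.Vt3 u).ncard := by
    rw [CBE.vt_decomp hu, Set.ncard_union_eq ?_ hVt2f hVt3f]
    rw [Set.disjoint_left]
    rintro ν ⟨a, _, rfl⟩ ⟨_, h3⟩
    simp at h3
  have hX3E3 := CBE.ncard_X3_eq_E3 hu
  have hVmc := CBE.ncard_vm (u := u)
  have hVt2c := CBE.ncard_vt2 hu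
  rw [hBC, hC]
  omega
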